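/- arXiv:1605.04084 — 2 statements merged into one kernel-verified Lean document; each statement's English description precedes it below -/
import Mathlib

section
/- Let n be a positive integer, Q a positive divisor of n, f : Z/nZ → ℂ, and k an integer. Define ρ(a) = Σ_{x ∈ Z/nZ, x ≡ a mod Q} f(x). Then (1/Q) Σ_{r=0}^{Q-1} |f̂(rn/Q)|²·e^{-2πi·2kr/Q} = Σ_{a=0}^{Q-1} ρ(a)·conj(ρ(a+2k)), where a+2k is taken modulo Q and f is real-valued. -/
open Complex Finset Real

noncomputable def eZ (Q : ℕ) (m : ℤ) : ℂ := Complex.exp (2 * π * I * m / Q)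

lemma eZ_add (Q : ℕ) (m₁ m₂ : ℤ) : eZ Q (m₁ + m₂) = eZ Q m₁ * eZ Q m₂ := by
  rw [eZ, eZ, eZ, ← Complex.exp_add]; congr 1; push_cast; ring

lemma eZ_int_mul (Q : ℕ) [NeZero Q] (t : ℤ) : eZ Q (Q * t) = 1 := by
  have hQ : (Q : ℂ) ≠ 0 := Nat.cast_ne_zero.mpr (NeZero.ne Q)
  rw [eZ, show 2 * (π:ℂ) * I * ((Q:ℤ) * t : ℤ) / Q = t * (2 * π * I) by
    push_cast; field_simp]
  exact Complex.exp_int_mul_two_pi_mul_I t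

lemma eZ_congr (Q : ℕ) [NeZero Q] {m₁ m₂ : ℤ} (h : (m₁ : ZMod Q) = m₂) :
    eZ Q m₁ = eZ Q m₂ := by
  obtain ⟨t, ht⟩ : (Q : ℤ) ∣ m₁ - m₂ :=
    (ZMod.intCast_zmod_eq_zero_iff_dvd (m₁ - m₂) Q).mp (by push_cast; rw [h]; ring)
  have : m₁ = m₂ + Q * t := by omega
  rw [this, eZ_add, eZ_int_mul, mul_one]

lemma eZ_conj (Q : ℕ) (m : ℤ) : (starRingEnd ℂ) (eZ Q m) = eZ Q (-m) := by
  rw [eZ, eZ, ← Complex.exp_conj]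
  congr 1
  simp [map_div₀, Complex.conj_I, map_ofNat]

lemma sum_zmod_val (Q : ℕ) [NeZero Q] (g : ℕ → ℂ) :
    ∑ r : ZMod Q, g r.val = ∑ j ∈ Finset.range Q, g j := by
  refine Finset.sum_nbij' (fun r => r.val) (fun j => (j : ZMod Q)) ?_ ?_ ?_ ?_ ?_
  · intro r _; exact Finset.mem_range.mpr (ZMod.val_lt r)
  · intro j _; exact Finset.mem_univ _
  · intro r _; simp [ZMod.natCast_val, ZMod.cast_id]
  · intro j hj; exact ZMod.val_cast_of_lt (Finset.mem_range.mp hj)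
  · intro r _; rfl

lemma eZ_orth (Q : ℕ) [NeZero Q] (m : ℤ) :
    ∑ r : ZMod Q, eZ Q (m * r.val) = if (m : ZMod Q) = 0 then (Q : ℂ) else 0 := by
  have hQ : (Q : ℂ) ≠ 0 := Nat.cast_ne_zero.mpr (NeZero.ne Q)
  have hpow : ∀ j : ℕ, eZ Q (m * j) = (eZ Q m) ^ j := by
    intro j
    rw [eZ, eZ, ← Complex.exp_nat_mul]
    congr 1; push_cast; ring
  rw [sum_zmod_val Q (fun j => eZ Q (m * j))]
  simp_rw [hpow]
  by_cases h : (m : ZMod Q) = 0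
  · obtain ⟨t, ht⟩ : (Q : ℤ) ∣ m := (ZMod.intCast_zmod_eq_zero_iff_dvd m Q).mp h
    have h1 : eZ Q m = 1 := ht ▸ eZ_int_mul Q t
    simp [h, h1]
  · rw [if_neg h]
    have hne : eZ Q m ≠ 1 := by
      intro hc
      rw [eZ, Complex.exp_eq_one_iff] at hc
      obtain ⟨t, ht⟩ := hc
      have h2πI : (2 * (π:ℂ) * I) ≠ 0 := by
        simp [Real.pi_ne_zero, Complex.I_ne_zero, Complex.ofReal_ne_zero]
      have : (m : ℂ) = t * Q := by
        field_simp at ht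
        linear_combination ht
      have : m = t * Q := by exact_mod_cast this
      exact h (by rw [this]; push_cast; simp)
    have hQpow : (eZ Q m) ^ Q = 1 := by
      rw [← hpow, show m * (Q:ℕ) = (Q:ℤ) * m by ring, eZ_int_mul]
    rw [geom_sum_eq hne, hQpow]
    simp

theorem stmt_9 (n Q : ℕ) [NeZero n] [NeZero Q] (hQn : Q ∣ n) (k : ℤ)
    (f : ZMod n → ℝ) (ρ : ZMod Q → ℝ)
    (hρ : ∀ a : ZMod Q, ρ a = ∑ x : ZMod n,
      if ZMod.castHom hQn (ZMod Q) x = a then f x else 0) :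
    (1 / Q : ℂ) * ∑ r : ZMod Q,
        (Complex.normSq (∑ x : ZMod n, (f x : ℂ) *
            Complex.exp (-(2 * π * I * (((r.val * (n / Q) : ℕ)) : ZMod n).val * x.val / n))) : ℂ) *
          Complex.exp (-(2 * π * I * (2 * k) * r.val / Q)) =
      ∑ a : ZMod Q, ((ρ a * ρ (a + (2 * k : ℤ)) : ℝ) : ℂ) := by
  have hQpos : 0 < Q := Nat.pos_of_ne_zero (NeZero.ne Q)
  have hQ0 : (Q : ℂ) ≠ 0 := Nat.cast_ne_zero.mpr (NeZero.ne Q)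
  have hn0 : 0 < n := Nat.pos_of_ne_zero (NeZero.ne n)
  obtain ⟨N, hN⟩ := id hQn
  have hN0 : 0 < N := by
    rcases Nat.eq_zero_or_pos N with h | h
    · subst h; simp at hN; omega
    · exact h
  have hNC : (N : ℂ) ≠ 0 := Nat.cast_ne_zero.mpr hN0.ne'
  have hnC : (n : ℂ) = Q * N := by rw [hN]; push_cast; ring
  have hexp : ∀ (r : ZMod Q) (x : ZMod n),
      Complex.exp (-(2 * π * I * (((r.val * (n / Q) : ℕ)) : ZMod n).val * x.val / n))
        = eZ Q (-((r.val : ℤ) * ((ZMod.castHom hQn (ZMod Q)) x).val)) := by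
    intro r x
    have hdiv : n / Q = N := by rw [hN]; exact Nat.mul_div_cancel_left N hQpos
    have hlt : r.val * N < n := by
      rw [hN]; exact (Nat.mul_lt_mul_right hN0).mpr (ZMod.val_lt r)
    have hval : (((r.val * (n / Q) : ℕ)) : ZMod n).val = r.val * N := by
      rw [hdiv]; exact ZMod.val_cast_of_lt hlt
    have h1 : Complex.exp (-(2 * π * I * (((r.val * (n / Q) : ℕ)) : ZMod n).val * x.val / n))
        = eZ Q (-((r.val : ℤ) * (x.val : ℤ))) := by
      rw [eZ]; congr 1
      rw [hval, hnC]
      push_cast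
      field_simp
    rw [h1]
    refine eZ_congr Q ?_
    push_cast
    simp [ZMod.natCast_val, ZMod.cast_id, ZMod.castHom_apply]
  have hexp2 : ∀ r : ZMod Q,
      Complex.exp (-(2 * π * I * (2 * k) * r.val / Q)) = eZ Q (-(2 * k * (r.val : ℤ))) := by
    intro r; rw [eZ]; congr 1; push_cast; ring
  have hS : ∀ r : ZMod Q,
      ∑ x : ZMod n, (f x : ℂ) * eZ Q (-((r.val : ℤ) * ((ZMod.castHom hQn (ZMod Q)) x).val))
        = ∑ a : ZMod Q, (ρ a : ℂ) * eZ Q (-((r.val : ℤ) * (a.val : ℤ))) := by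
    intro r
    rw [eq_comm]
    calc ∑ a : ZMod Q, (ρ a : ℂ) * eZ Q (-((r.val : ℤ) * (a.val : ℤ)))
        = ∑ a : ZMod Q, ∑ x : ZMod n,
            (if ZMod.castHom hQn (ZMod Q) x = a then (f x : ℂ) else 0)
              * eZ Q (-((r.val : ℤ) * (a.val : ℤ))) := by
          refine Finset.sum_congr rfl fun a _ => ?_
          rw [hρ a]
          push_cast [Finset.sum_mul, apply_ite]
          rfl
      _ = ∑ x : ZMod n, ∑ a : ZMod Q,
            (if ZMod.castHom hQn (ZMod Q) x = a then (f x : ℂ) else 0)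
              * eZ Q (-((r.val : ℤ) * (a.val : ℤ))) := Finset.sum_comm
      _ = ∑ x : ZMod n, (f x : ℂ) * eZ Q (-((r.val : ℤ) * ((ZMod.castHom hQn (ZMod Q)) x).val)) := by
          refine Finset.sum_congr rfl fun x _ => ?_
          simp_rw [ite_mul, zero_mul]
          rw [Finset.sum_ite_eq]
          simp
  simp only [hexp, hexp2]
  have hterm : ∀ r : ZMod Q,
      ((Complex.normSq (∑ x : ZMod n, (f x : ℂ) *
          eZ Q (-((r.val : ℤ) * ((ZMod.castHom hQn (ZMod Q)) x).val)))) : ℂ)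
        * eZ Q (-(2 * k * (r.val : ℤ)))
      = ∑ a : ZMod Q, ∑ b : ZMod Q, (ρ a : ℂ) * (ρ b : ℂ)
          * eZ Q (((b.val : ℤ) - (a.val : ℤ) - 2 * k) * (r.val : ℤ)) := by
    intro r
    rw [← Complex.mul_conj, hS r]
    have hconj : (starRingEnd ℂ) (∑ a : ZMod Q, (ρ a : ℂ) * eZ Q (-((r.val : ℤ) * (a.val : ℤ))))
        = ∑ b : ZMod Q, (ρ b : ℂ) * eZ Q ((r.val : ℤ) * (b.val : ℤ)) := by
      rw [map_sum]
      refine Finset.sum_congr rfl fun b _ => ?_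
      rw [map_mul, Complex.conj_ofReal, eZ_conj, neg_neg]
    rw [hconj, Finset.sum_mul_sum, Finset.sum_mul]
    refine Finset.sum_congr rfl fun a _ => ?_
    rw [Finset.sum_mul]
    refine Finset.sum_congr rfl fun b _ => ?_
    rw [mul_mul_mul_comm, mul_assoc, ← eZ_add, ← eZ_add]
    congr 2
    ring
  simp only [hterm]
  rw [Finset.sum_comm]
  have horth : ∀ a : ZMod Q,
      ∑ b : ZMod Q, ∑ r : ZMod Q, (ρ a : ℂ) * (ρ b : ℂ)
          * eZ Q (((b.val : ℤ) - (a.val : ℤ) - 2 * k) * (r.val : ℤ))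
      = (ρ a : ℂ) * (ρ (a + ((2 * k : ℤ) : ZMod Q)) : ℂ) * Q := by
    intro a
    have : ∀ b : ZMod Q,
        ∑ r : ZMod Q, (ρ a : ℂ) * (ρ b : ℂ)
            * eZ Q (((b.val : ℤ) - (a.val : ℤ) - 2 * k) * (r.val : ℤ))
        = (ρ a : ℂ) * (ρ b : ℂ) * (if b = a + ((2 * k : ℤ) : ZMod Q) then (Q : ℂ) else 0) := by
      intro b
      rw [← Finset.mul_sum, eZ_orth]
      have hcond : ((((b.val : ℤ) - (a.val : ℤ) - 2 * k) : ℤ) : ZMod Q) = 0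
          ↔ b = a + ((2 * k : ℤ) : ZMod Q) := by
        push_cast
        simp only [ZMod.natCast_val, ZMod.cast_id]
        rw [sub_sub, sub_eq_zero, eq_comm]
      simp only [hcond]
    simp_rw [this, mul_ite, mul_zero]
    rw [Finset.sum_ite_eq']
    simp
  have hswap : ∀ a : ZMod Q,
      ∑ r : ZMod Q, ∑ b : ZMod Q, (ρ a : ℂ) * (ρ b : ℂ)
          * eZ Q (((b.val : ℤ) - (a.val : ℤ) - 2 * k) * (r.val : ℤ))
      = ∑ b : ZMod Q, ∑ r : ZMod Q, (ρ a : ℂ) * (ρ b : ℂ)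
          * eZ Q (((b.val : ℤ) - (a.val : ℤ) - 2 * k) * (r.val : ℤ)) :=
    fun a => Finset.sum_comm
  simp only [hswap, horth]
  rw [Finset.mul_sum]
  refine Finset.sum_congr rfl fun a _ => ?_
  push_cast
  field_simp
end

section
/- Let Q be a squarefree positive integer and k a positive integer. Then Σ_{d | Q} |μ(d)|·c_d(2k)/φ(d)² = Π_{p | gcd(2k,Q)} p/(p−1) · Π_{p | Q, p ∤ 2k} p(p−2)/(p−1)², where c_d is the Ramanujan sum, μ the Möbius function, and φ the Euler totient. -/
open Complex Finset Real

-- geometric sum of roots of unity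
lemma geom_root_sum (n m : ℕ) (hn : n ≠ 0) :
    ∑ c ∈ Finset.Icc 1 n, Complex.exp (-(2 * π * I * m * c / n)) =
      if n ∣ m then (n : ℂ) else 0 := by
  have hn' : (n : ℂ) ≠ 0 := Nat.cast_ne_zero.mpr hn
  set ω : ℂ := Complex.exp (-(2 * π * I * m / n)) with hω
  have hterm : ∀ c : ℕ, Complex.exp (-(2 * π * I * (m : ℂ) * c / n)) = ω ^ c := by
    intro c
    rw [hω, ← Complex.exp_nat_mul]
    congr 1; ring
  have hωn : ω ^ n = 1 := by
    rw [hω, ← Complex.exp_nat_mul]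
    have h1 : (n : ℂ) * -(2 * π * I * m / n) = (-(m : ℤ)) * (2 * π * I) := by
      field_simp
      push_cast
      ring
    rw [h1]
    exact_mod_cast Complex.exp_int_mul_two_pi_mul_I (-(m : ℤ))
  rw [Finset.sum_congr rfl fun c _ => hterm c]
  by_cases h : n ∣ m
  · have hω1 : ω = 1 := by
      obtain ⟨t, rfl⟩ := h
      rw [hω]
      have h1 : -(2 * π * I * ((n * t : ℕ) : ℂ) / n) = (-(t : ℤ)) * (2 * π * I) := by
        push_cast
        field_simp
      rw [h1]
      exact_mod_cast Complex.exp_int_mul_two_pi_mul_I (-(t : ℤ))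
    simp [hω1, h, Nat.card_Icc]
  · have hω1 : ω ≠ 1 := by
      intro h1
      rw [hω, Complex.exp_eq_one_iff] at h1
      obtain ⟨z, hz⟩ := h1
      apply h
      have hπ : (2 * (π : ℂ) * I) ≠ 0 := by
        simp [Real.pi_ne_zero, Complex.I_ne_zero]
      have h3 : 2 * (π : ℂ) * I * ((m : ℂ) / n) = 2 * (π : ℂ) * I * (-z) := by
        linear_combination -hz
      have h4 : (m : ℂ) / n = -z := mul_left_cancel₀ hπ h3
      rw [div_eq_iff hn'] at h4
      have h5 : (m : ℂ) = ((n * (-z) : ℤ) : ℂ) := by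
        push_cast
        linear_combination h4
      have h6 : (m : ℤ) = n * (-z) := by exact_mod_cast h5
      exact Int.ofNat_dvd.mp ⟨-z, h6⟩
    have hshift : ∀ N : ℕ, ∑ c ∈ Finset.Icc 1 N, ω ^ c = ω * ∑ c ∈ Finset.range N, ω ^ c := by
      intro N
      induction N with
      | zero => simp
      | succ N ih =>
          rw [Finset.sum_Icc_succ_top (by omega), ih, Finset.sum_range_succ]
          ring
    rw [hshift, geom_sum_eq hω1, hωn, if_neg h]
    simp


lemma ramanujan_eval (m d : ℕ) (hd : d ≠ 0) :
    (∑ b ∈ Finset.Icc 1 d, if Nat.gcd b d = 1 then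
        Complex.exp (-(2 * π * I * m * b / d)) else 0) =
      ∑ e ∈ d.divisors, (ArithmeticFunction.moebius e : ℂ) *
        (if (d / e) ∣ m then ((d / e : ℕ) : ℂ) else 0) := by
  have step1 : ∀ b ∈ Finset.Icc 1 d,
      (if Nat.gcd b d = 1 then Complex.exp (-(2 * π * I * m * b / d)) else 0) =
      ∑ e ∈ d.divisors, (if e ∣ b then (ArithmeticFunction.moebius e : ℂ) else 0) *
        Complex.exp (-(2 * π * I * m * b / d)) := by
    intro b hb
    rw [← Finset.sum_mul]
    have hfil : d.divisors.filter (· ∣ b) = (Nat.gcd b d).divisors := by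
      ext e
      simp only [Finset.mem_filter, Nat.mem_divisors, Nat.dvd_gcd_iff]
      constructor
      · rintro ⟨⟨h1, h2⟩, h3⟩
        exact ⟨⟨h3, h1⟩, Nat.gcd_ne_zero_right hd⟩
      · rintro ⟨⟨h1, h2⟩, h3⟩
        exact ⟨⟨h2, hd⟩, h1⟩
    have hsum : (∑ e ∈ d.divisors, if e ∣ b then (ArithmeticFunction.moebius e : ℂ) else 0)
        = if Nat.gcd b d = 1 then 1 else 0 := by
      rw [← Finset.sum_filter, hfil]
      have := congrArg (fun f : ArithmeticFunction ℂ => f (Nat.gcd b d))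
        (ArithmeticFunction.coe_moebius_mul_coe_zeta (R := ℂ))
      simp only [ArithmeticFunction.coe_mul_zeta_apply, ArithmeticFunction.intCoe_apply,
        ArithmeticFunction.one_apply] at this
      exact this
    rw [hsum]
    split_ifs <;> simp
  rw [Finset.sum_congr rfl step1, Finset.sum_comm]
  refine Finset.sum_congr rfl fun e he => ?_
  obtain ⟨hed, -⟩ := Nat.mem_divisors.mp he
  have he0 : e ≠ 0 := by rintro rfl; exact hd (zero_dvd_iff.mp hed)
  have hde0 : d / e ≠ 0 := Nat.div_ne_zero_iff_of_dvd hed |>.mpr ⟨hd, he0⟩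
  have he' : (e : ℂ) ≠ 0 := Nat.cast_ne_zero.mpr he0
  rw [← geom_root_sum (d / e) m hde0]
  simp only [ite_mul, zero_mul]
  rw [← Finset.sum_filter, Finset.mul_sum]
  refine Finset.sum_nbij' (fun b => b / e) (fun c => e * c) ?_ ?_ ?_ ?_ ?_
  · intro b hb
    simp only [Finset.mem_filter, Finset.mem_Icc] at hb
    obtain ⟨⟨hb1, hb2⟩, hbe⟩ := hb
    simp only [Finset.mem_Icc]
    constructor
    · exact (Nat.one_le_div_iff (Nat.pos_of_ne_zero he0)).mpr (Nat.le_of_dvd (by omega) hbe)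
    · exact Nat.div_le_div_right hb2
  · intro c hc
    simp only [Finset.mem_Icc] at hc
    simp only [Finset.mem_filter, Finset.mem_Icc]
    refine ⟨⟨?_, ?_⟩, Dvd.intro c rfl⟩
    · exact Nat.one_le_iff_ne_zero.mpr (Nat.mul_ne_zero he0 (by omega))
    · calc e * c ≤ e * (d / e) := Nat.mul_le_mul_left e hc.2
        _ = d := Nat.mul_div_cancel' hed
  · intro b hb
    simp only [Finset.mem_filter] at hb
    exact Nat.mul_div_cancel' hb.2
  · intro c hc
    exact Nat.mul_div_cancel_left c (Nat.pos_of_ne_zero he0)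
  · intro b hb
    simp only [Finset.mem_filter] at hb
    obtain ⟨c, rfl⟩ := hb.2
    have hc' : (fun b => b / e) (e * c) = c := Nat.mul_div_cancel_left c (Nat.pos_of_ne_zero he0)
    rw [show e * c / e = c from hc']
    congr 1
    have hd_eq : (d : ℂ) = (e : ℂ) * ((d / e : ℕ) : ℂ) := by
      rw [← Nat.cast_mul, Nat.mul_div_cancel' hed]
    rw [hd_eq]
    push_cast
    rw [mul_comm ((e:ℂ)) ((c:ℂ))]
    field_simp


noncomputable def gAF (m : ℕ) : ArithmeticFunction ℂ :=
  ⟨fun e => if e ∣ m ∧ e ≠ 0 then (e : ℂ) else 0, by simp⟩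

lemma gAF_apply (m e : ℕ) : gAF m e = if e ∣ m ∧ e ≠ 0 then (e : ℂ) else 0 := rfl

lemma gAF_mult (m : ℕ) : (gAF m).IsMultiplicative := by
  refine ⟨by simp [gAF_apply], ?_⟩
  intro a b hab
  simp only [gAF_apply]
  rcases eq_or_ne a 0 with rfl | ha
  · simp
  rcases eq_or_ne b 0 with rfl | hb
  · simp
  have hdvd : a * b ∣ m ↔ a ∣ m ∧ b ∣ m :=
    ⟨fun h => ⟨(dvd_mul_right a b).trans h, (dvd_mul_left b a).trans h⟩,
     fun h => hab.mul_dvd_of_dvd_of_dvd h.1 h.2⟩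
  simp only [hdvd, ha, hb, mul_ne_zero ha hb, ne_eq, not_false_eq_true, and_true]
  by_cases h1 : a ∣ m <;> by_cases h2 : b ∣ m <;> simp [h1, h2, Nat.cast_mul]

noncomputable def tAF : ArithmeticFunction ℂ :=
  ⟨fun n => (Nat.totient n : ℂ), by simp⟩

lemma tAF_apply (n : ℕ) : tAF n = (Nat.totient n : ℂ) := rfl

lemma tAF_mult : tAF.IsMultiplicative := by
  refine ⟨by simp [tAF_apply], ?_⟩
  intro a b hab
  simp only [tAF_apply, Nat.totient_mul hab, Nat.cast_mul]

noncomputable def FAF (m : ℕ) : ArithmeticFunction ℂ :=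
  ArithmeticFunction.pdiv ((ArithmeticFunction.moebius : ArithmeticFunction ℤ) * gAF m)
    (ArithmeticFunction.pmul tAF tAF)

lemma FAF_mult (m : ℕ) : (FAF m).IsMultiplicative :=
  ((ArithmeticFunction.isMultiplicative_moebius.intCast).mul (gAF_mult m)).pdiv
    (tAF_mult.pmul tAF_mult)

theorem stmt_12 (Q k : ℕ) (hQ : 0 < Q) (hQsf : Squarefree Q) (hk : 0 < k) :
    (∑ d ∈ Q.divisors,
        ((|ArithmeticFunction.moebius d| : ℤ) : ℂ) *
          (∑ b ∈ Finset.Icc 1 d, if Nat.gcd b d = 1 then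
              Complex.exp (-(2 * π * I * (2 * k) * b / d)) else 0) /
            (Nat.totient d : ℂ) ^ 2) =
      (∏ p ∈ Q.primeFactors ∩ (2 * k).primeFactors, ((p : ℂ) / (p - 1))) *
        ∏ p ∈ Q.primeFactors \ (2 * k).primeFactors, ((p : ℂ) * (p - 2) / (p - 1) ^ 2) := by
  set m : ℕ := 2 * k with hm
  have hm0 : m ≠ 0 := by omega
  -- Step 1: rewrite the sum as ∑ F d
  have hsum : (∑ d ∈ Q.divisors,
        ((|ArithmeticFunction.moebius d| : ℤ) : ℂ) *
          (∑ b ∈ Finset.Icc 1 d, if Nat.gcd b d = 1 then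
              Complex.exp (-(2 * π * I * (2 * k) * b / d)) else 0) /
            (Nat.totient d : ℂ) ^ 2) = ∑ d ∈ Q.divisors, FAF m d := by
    refine Finset.sum_congr rfl fun d hd => ?_
    obtain ⟨hdQ, hQ0⟩ := Nat.mem_divisors.mp hd
    have hd0 : d ≠ 0 := by rintro rfl; exact hQ0 (zero_dvd_iff.mp hdQ)
    have hdsf : Squarefree d := hQsf.squarefree_of_dvd hdQ
    have habs : |ArithmeticFunction.moebius d| = 1 :=
      ArithmeticFunction.abs_moebius_eq_one_of_squarefree hdsf
    have hexp : ∀ b : ℕ, (-(2 * (π:ℂ) * I * (2 * k) * b / d)) = -(2 * π * I * (m:ℂ) * b / d) := by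
      intro b; rw [hm]; push_cast; ring
    have hinner : (∑ b ∈ Finset.Icc 1 d, if Nat.gcd b d = 1 then
          Complex.exp (-(2 * (π:ℂ) * I * (2 * k) * b / d)) else 0) =
        ((ArithmeticFunction.moebius : ArithmeticFunction ℤ) *
          (gAF m) : ArithmeticFunction ℂ) d := by
      simp only [hexp]
      rw [ramanujan_eval m d hd0, ArithmeticFunction.mul_apply,
        Nat.sum_divisorsAntidiagonal
          (fun x y => ((ArithmeticFunction.moebius : ArithmeticFunction ℂ)) x * gAF m y)]
      refine Finset.sum_congr rfl fun e he => ?_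
      obtain ⟨hed, -⟩ := Nat.mem_divisors.mp he
      have hde0 : d / e ≠ 0 := by
        have := Nat.div_dvd_of_dvd hed
        intro h0
        exact hd0 (by simpa [h0] using (Nat.div_mul_cancel hed).symm)
      rw [ArithmeticFunction.intCoe_apply, gAF_apply]
      simp [hde0]
    rw [habs, hinner]
    simp only [FAF, ArithmeticFunction.pdiv_apply, ArithmeticFunction.pmul_apply, tAF_apply]
    rw [sq]
    push_cast
    ring
  rw [hsum, ← (FAF_mult m).prodPrimeFactors_one_add_of_squarefree hQsf]
  -- Step 2: split the product
  have hsplit : (∏ p ∈ Q.primeFactors, (1 + FAF m p)) =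
      (∏ p ∈ Q.primeFactors \ m.primeFactors, (1 + FAF m p)) *
        ∏ p ∈ Q.primeFactors ∩ m.primeFactors, (1 + FAF m p) := by
    rw [← Finset.prod_union (Finset.disjoint_sdiff_inter _ _), Finset.sdiff_union_inter]
  rw [hsplit, mul_comm]
  congr 1
  · refine Finset.prod_congr rfl fun p hp => ?_
    obtain ⟨hp1, hp2⟩ := Finset.mem_inter.mp hp
    have hpp : p.Prime := Nat.prime_of_mem_primeFactors hp1
    have hpm : p ∣ m := Nat.dvd_of_mem_primeFactors hp2
    have hp0 : p ≠ 0 := hpp.pos.ne'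
    have hmul : (((ArithmeticFunction.moebius : ArithmeticFunction ℤ) :
          ArithmeticFunction ℂ) * gAF m) p
        = (if p ∣ m then (p : ℂ) else 0) - 1 := by
      rw [ArithmeticFunction.mul_apply,
        Nat.sum_divisorsAntidiagonal
          (fun x y => ((ArithmeticFunction.moebius : ArithmeticFunction ℂ)) x * gAF m y),
        hpp.divisors]
      rw [Finset.sum_insert (by simpa using Ne.symm hpp.ne_one), Finset.sum_singleton]
      simp only [Nat.div_one, Nat.div_self hpp.pos, ArithmeticFunction.intCoe_apply,
        ArithmeticFunction.moebius_apply_one,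
        ArithmeticFunction.moebius_apply_prime hpp, gAF_apply, hp0]
      simp only [one_dvd, ne_eq, one_ne_zero, not_false_eq_true, and_true, true_and,
        Nat.cast_one, if_true]
      rw [if_congr (and_iff_left hp0) rfl rfl]
      split_ifs <;> ring
    have htot : tAF p = (p : ℂ) - 1 := by
      rw [tAF_apply, Nat.totient_prime hpp, Nat.cast_sub hpp.one_le, Nat.cast_one]
    have hne : (p : ℂ) - 1 ≠ 0 := by
      rw [← Nat.cast_one (R := ℂ), ← Nat.cast_sub hpp.one_le, Nat.cast_ne_zero]
      have := hpp.two_le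
      omega
    simp only [FAF, ArithmeticFunction.pdiv_apply, ArithmeticFunction.pmul_apply, htot, hmul]
    rw [if_pos hpm]
    field_simp
    try ring
  · refine Finset.prod_congr rfl fun p hp => ?_
    obtain ⟨hp1, hp2⟩ := Finset.mem_sdiff.mp hp
    have hpp : p.Prime := Nat.prime_of_mem_primeFactors hp1
    have hpm : ¬ p ∣ m := fun h => hp2 (Nat.mem_primeFactors.mpr ⟨hpp, h, hm0⟩)
    have hp0 : p ≠ 0 := hpp.pos.ne'
    have hmul : (((ArithmeticFunction.moebius : ArithmeticFunction ℤ) :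
          ArithmeticFunction ℂ) * gAF m) p
        = (if p ∣ m then (p : ℂ) else 0) - 1 := by
      rw [ArithmeticFunction.mul_apply,
        Nat.sum_divisorsAntidiagonal
          (fun x y => ((ArithmeticFunction.moebius : ArithmeticFunction ℂ)) x * gAF m y),
        hpp.divisors]
      rw [Finset.sum_insert (by simpa using Ne.symm hpp.ne_one), Finset.sum_singleton]
      simp only [Nat.div_one, Nat.div_self hpp.pos, ArithmeticFunction.intCoe_apply,
        ArithmeticFunction.moebius_apply_one,
        ArithmeticFunction.moebius_apply_prime hpp, gAF_apply, hp0]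
      simp only [one_dvd, ne_eq, one_ne_zero, not_false_eq_true, and_true, true_and,
        Nat.cast_one, if_true]
      rw [if_congr (and_iff_left hp0) rfl rfl]
      split_ifs <;> ring
    have htot : tAF p = (p : ℂ) - 1 := by
      rw [tAF_apply, Nat.totient_prime hpp, Nat.cast_sub hpp.one_le, Nat.cast_one]
    have hne : (p : ℂ) - 1 ≠ 0 := by
      rw [← Nat.cast_one (R := ℂ), ← Nat.cast_sub hpp.one_le, Nat.cast_ne_zero]
      have := hpp.two_le
      omega
    simp only [FAF, ArithmeticFunction.pdiv_apply, ArithmeticFunction.pmul_apply, htot, hmul]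
    rw [if_neg hpm]
    field_simp
    try ring
end
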